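/- arXiv:1905.10540 — 3 statements merged into one kernel-verified Lean document; each statement's English description precedes it below -/
import Mathlib

section
/- Let v_1, ..., v_n ∈ R^p be pairwise distinct, let Δ = (1/2)·min_{j≠k} ‖v_j - v_k‖², and suppose σ_0² ≥ Δ / (log(n²) - log(n² - 1)). Then for every i with 1 ≤ i ≤ n, the function α(v) = Σ_{k=1}^n k·exp(-‖v - v_k‖²/(2σ_0²)) satisfies α(v_i) > n(n+1)/2 - (i+1). -/
lemma gauss_aux (n : ℕ) : ∑ k : Fin n, ((k : ℝ) + 1) = (n : ℝ) * ((n : ℝ) + 1) / 2 := by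
  induction n with
  | zero => simp
  | succ m ih =>
    rw [Fin.sum_univ_castSucc]
    simp only [Fin.coe_castSucc, Fin.val_last]
    rw [ih]
    push_cast
    ring

/-- For pairwise distinct `v 1, …, v n` in `ℝ^p`, with
`Δ = (1/2) min_{j≠k} ‖v_j - v_k‖²` and `σ₀² ≥ Δ / (log(n²) - log(n²-1))`
(stated in multiplied form `σ₀² (log n² - log(n²-1)) ≥ (1/2)‖v_j - v_k‖²` for all `j ≠ k`),
the Gaussian score satisfies `α(v_i) > n(n+1)/2 - (i+1)` for each `1 ≤ i ≤ n`
(here `i : Fin n` represents the 1-indexed index `i+1`, so the bound is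
`n(n+1)/2 - ((i : ℝ) + 2)`). -/
theorem stmt_1 (p n : ℕ) (v : Fin n → EuclideanSpace ℝ (Fin p))
    (hv : Function.Injective v) (σ₀ : ℝ) (hσ₀ : 0 < σ₀)
    (hσ : ∀ j k : Fin n, j ≠ k →
      σ₀ ^ 2 * (Real.log ((n : ℝ) ^ 2) - Real.log ((n : ℝ) ^ 2 - 1)) ≥
        (1 / 2) * ‖v j - v k‖ ^ 2) :
    ∀ i : Fin n,
      (∑ k : Fin n, ((k : ℝ) + 1) * Real.exp (-‖v i - v k‖ ^ 2 / (2 * σ₀ ^ 2))) >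
        (n : ℝ) * ((n : ℝ) + 1) / 2 - ((i : ℝ) + 2) := by
  intro i
  have hn : 1 ≤ n := by have := i.isLt; omega
  have hn1 : (1:ℝ) ≤ (n:ℝ) := by exact_mod_cast hn
  have hn2pos : (0:ℝ) < (n:ℝ)^2 := by positivity
  set c : ℝ := 1 - 1/(n:ℝ)^2 with hc
  have hb : ∀ k : Fin n,
      ((k:ℝ)+1) * c + (if k = i then ((i:ℝ)+1) * (1/(n:ℝ)^2) else 0)
      ≤ ((k:ℝ)+1) * Real.exp (-‖v i - v k‖ ^ 2 / (2 * σ₀ ^ 2)) := by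
    intro k
    by_cases hk : k = i
    · subst hk
      simp only [if_pos rfl, sub_self, norm_zero, ne_eq]
      rw [hc]
      have : -(0:ℝ) ^ 2 / (2 * σ₀ ^ 2) = 0 := by
        rw [zero_pow (by norm_num)]; simp
      rw [this, Real.exp_zero]
      have hn2 : ((n:ℝ)^2) ≠ 0 := ne_of_gt hn2pos
      simp only [if_true]
      exact le_of_eq (by ring)
    · simp only [if_neg hk, add_zero]
      have hkne : (k:ℕ) ≠ (i:ℕ) := fun h => hk (Fin.ext h)
      have hn2 : 2 ≤ n := by have := i.isLt; have := k.isLt; omega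
      have hn2' : (2:ℝ) ≤ (n:ℝ) := by exact_mod_cast hn2
      have hpos : (0:ℝ) < (n:ℝ)^2 - 1 := by nlinarith
      have hσk := hσ i k (Ne.symm hk)
      have h2σ : (0:ℝ) < 2 * σ₀ ^ 2 := by positivity
      have hlog : Real.log ((n:ℝ)^2 - 1) - Real.log ((n:ℝ)^2) ≤
          -‖v i - v k‖^2 / (2*σ₀^2) := by
        rw [le_div_iff₀ h2σ]
        nlinarith [hσk]
      have hcle : c ≤ Real.exp (-‖v i - v k‖ ^ 2 / (2 * σ₀ ^ 2)) := by
        have hceq : c = ((n:ℝ)^2 - 1)/(n:ℝ)^2 := by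
          rw [hc]; field_simp
        rw [hceq, ← Real.exp_log (show (0:ℝ) < ((n:ℝ)^2 - 1)/(n:ℝ)^2 from
          div_pos hpos hn2pos)]
        apply Real.exp_le_exp.mpr
        rw [Real.log_div (ne_of_gt hpos) (ne_of_gt hn2pos)]
        exact hlog
      have : (0:ℝ) ≤ (k:ℝ)+1 := by positivity
      exact mul_le_mul_of_nonneg_left hcle this
  have hle := Finset.sum_le_sum (fun k (_ : k ∈ Finset.univ) => hb k)
  have hsum : ∑ k : Fin n, (((k:ℝ)+1) * c + (if k = i then ((i:ℝ)+1)*(1/(n:ℝ)^2) else 0))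
      = ((n:ℝ)*((n:ℝ)+1)/2) * c + ((i:ℝ)+1)*(1/(n:ℝ)^2) := by
    rw [Finset.sum_add_distrib, ← Finset.sum_mul, gauss_aux,
      Finset.sum_ite_eq' Finset.univ i, if_pos (Finset.mem_univ i)]
  rw [hsum] at hle
  refine lt_of_lt_of_le ?_ hle
  have hS : (n:ℝ)*((n:ℝ)+1)/2 ≤ (n:ℝ)^2 := by nlinarith
  have hi0 : (0:ℝ) ≤ (i:ℝ) := Nat.cast_nonneg _
  have ht : (0:ℝ) ≤ 1/(n:ℝ)^2 := by positivity
  have htn : (1/(n:ℝ)^2) * (n:ℝ)^2 = 1 := by field_simp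
  have hprod : (0:ℝ) ≤ ((n:ℝ)^2 - (n:ℝ)*((n:ℝ)+1)/2 + (i:ℝ)) * (1/(n:ℝ)^2) :=
    mul_nonneg (by linarith) ht
  rw [hc]
  nlinarith [hprod, htn, ht, hi0]
end

section
/- Let T be a full binary tree (every internal node has exactly two children) with N internal nodes, N ≥ 1, and let l_1, ..., l_{N+1} be the depths (root-to-leaf path lengths) of its N+1 leaves. Then for every constant C with 0 < C < 1/2, Σ_{k=1}^{N+1} C^{l_k} ≤ C^N + Σ_{k=1}^{N} C^k. -/
/-- A full binary tree: every node has exactly 0 or 2 children. -/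
inductive FBT where
  | leaf : FBT
  | node : FBT → FBT → FBT

/-- Number of internal nodes of a full binary tree. -/
def FBT.internals : FBT → ℕ
  | .leaf => 0
  | .node a b => a.internals + b.internals + 1

/-- The list of root-to-leaf depths (edge counts) of all leaves. -/
def FBT.depths : FBT → List ℕ
  | .leaf => [0]
  | .node a b => a.depths.map (· + 1) ++ b.depths.map (· + 1)

noncomputable def fbt_f (C : ℝ) (n : ℕ) : ℝ := C ^ n + ∑ k ∈ Finset.Icc 1 n, C ^ k

lemma fbt_mulsum (C : ℝ) : ∀ n : ℕ,
    C * ∑ k ∈ Finset.Icc 1 n, C ^ k = (∑ k ∈ Finset.Icc 1 n, C ^ k) + C ^ (n + 1) - C := by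
  intro n
  induction n with
  | zero => simp
  | succ n ih =>
    rw [Finset.sum_Icc_succ_top (by omega : 1 ≤ n + 1)]
    rw [mul_add, ih]; ring

lemma fbt_fsucc (C : ℝ) (n : ℕ) : fbt_f C (n + 1) = C * (1 + fbt_f C n) := by
  unfold fbt_f
  rw [Finset.sum_Icc_succ_top (by omega : 1 ≤ n + 1), mul_add, mul_add, fbt_mulsum]
  ring

lemma fbt_key (C : ℝ) (hC0 : 0 < C) (hC : C < 1 / 2) : ∀ a b : ℕ,
    fbt_f C a + fbt_f C b ≤ 1 + fbt_f C (a + b) := by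
  intro a
  induction a with
  | zero => intro b; simp [fbt_f]
  | succ a ih =>
    intro b
    have h1 : fbt_f C (a + 1) = fbt_f C a + C ^ a * (2 * C - 1) := by
      rw [fbt_fsucc]; unfold fbt_f; rw [mul_add, mul_add, fbt_mulsum]; ring
    have h2 : fbt_f C (a + b + 1) = fbt_f C (a + b) + C ^ (a + b) * (2 * C - 1) := by
      rw [fbt_fsucc]; unfold fbt_f; rw [mul_add, mul_add, fbt_mulsum]; ring
    have h3 : C ^ (a + b) ≤ C ^ a := by
      apply pow_le_pow_of_le_one hC0.le (by linarith) (by omega)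
    have h4 : C ^ a * (2 * C - 1) ≤ C ^ (a + b) * (2 * C - 1) := by
      apply mul_le_mul_of_nonpos_right h3 (by linarith)
    have := ih b
    have : a + 1 + b = a + b + 1 := by omega
    rw [this, h1, h2]
    linarith [ih b]

lemma fbt_main (C : ℝ) (hC0 : 0 < C) (hC : C < 1 / 2) : ∀ T : FBT,
    (T.depths.map fun l => C ^ l).sum ≤ fbt_f C T.internals := by
  intro T
  induction T with
  | leaf => simp [FBT.depths, FBT.internals, fbt_f]
  | node a b iha ihb =>
    have hmap : ∀ t : FBT, ((t.depths.map (· + 1)).map fun l => C ^ l).sum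
        = C * (t.depths.map fun l => C ^ l).sum := by
      intro t
      rw [List.map_map]
      induction t.depths with
      | nil => simp
      | cons x xs ih => simp [ih]; ring
    show ((FBT.depths (.node a b)).map fun l => C ^ l).sum ≤ _
    rw [FBT.depths, List.map_append, List.sum_append, hmap, hmap]
    have hint : FBT.internals (.node a b) = a.internals + b.internals + 1 := rfl
    rw [hint, fbt_fsucc]
    have hkey := fbt_key C hC0 hC a.internals b.internals
    nlinarith [iha, ihb]

/-- For a full binary tree with `N ≥ 1` internal nodes and leaf depths
`l_1, …, l_{N+1}`, and every `0 < C < 1/2`: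
`∑_{k=1}^{N+1} C^{l_k} ≤ C^N + ∑_{k=1}^N C^k`. -/
theorem stmt_3 (T : FBT) (N : ℕ) (hN : T.internals = N) (hN1 : 1 ≤ N)
    (C : ℝ) (hC0 : 0 < C) (hC : C < 1 / 2) :
    (T.depths.map fun l => C ^ l).sum ≤ C ^ N + ∑ k ∈ Finset.Icc 1 N, C ^ k := by
  have := fbt_main C hC0 hC T
  rw [hN] at this
  exact this
end

section
/- Suppose h_t ∈ R^p depends on h_{t-1} only through the leaves of a full binary tree with N internal nodes in which at most all N+1 leaves equal h_{t-1}, and along every root-to-leaf path P^k = [P_0^k, ..., P_{l_k}^k] each parent-to-child Jacobian satisfies ‖∂P_j^k/∂P_{j-1}^k‖ ≤ C₀ with 0 < C₀ < 1/2. Then ‖∂h_t/∂h_{t-1}‖ ≤ Σ_{k=1}^{N+1} C₀^{l_k} ≤ 1/2 + C₀ < 1. -/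
/-- STATEMENT 13: Suppose `h_t` depends on `h_{t-1}` only through the leaves of a full
binary tree with `N ≥ 1` internal nodes (so a subset `S` of the `N+1` leaves equals
`h_{t-1}`), and along the root-to-leaf path to leaf `k` each parent-to-child Jacobian
(modeled as the operators in the list `mats k`, of length the depth `l_k`) has norm
at most `C₀` with `0 < C₀ < 1/2`.  The total Jacobian is
`J = ∑_{k ∈ S} (product of Jacobians along path k)`, and
`‖J‖ ≤ ∑_{k=1}^{N+1} C₀^{l_k} ≤ 1/2 + C₀ < 1`. -/lemma fbt_sum_le_one (C₀ : ℝ) (hC0 : 0 < C₀) (hC : C₀ < 1/2) :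
    ∀ T : FBT, ((T.depths).map (fun l => C₀ ^ l)).sum ≤ 1 := by
  intro T
  induction T with
  | leaf => simp [FBT.depths]
  | node a b iha ihb =>
    simp only [FBT.depths, List.map_append, List.sum_append, List.map_map,
      Function.comp_def, pow_succ]
    rw [List.sum_map_mul_right, List.sum_map_mul_right]
    nlinarith [iha, ihb]

lemma prod_norm_le (p : ℕ) (C₀ : ℝ) (hC0 : 0 < C₀)
    (L : List (EuclideanSpace ℝ (Fin p) →L[ℝ] EuclideanSpace ℝ (Fin p)))
    (hL : L ≠ []) (h : ∀ A ∈ L, ‖A‖ ≤ C₀) : ‖L.prod‖ ≤ C₀ ^ L.length := by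
  induction L with
  | nil => simp at hL
  | cons A L ih =>
    rcases eq_or_ne L [] with rfl | hne
    · simp only [List.prod_singleton, List.length_singleton, pow_one]
      exact h A (by simp)
    · rw [List.prod_cons]
      calc ‖A * L.prod‖ ≤ ‖A‖ * ‖L.prod‖ := norm_mul_le _ _
        _ ≤ C₀ * C₀ ^ L.length := by
            apply mul_le_mul (h A (by simp)) (ih hne (fun B hB => h B (by simp [hB])))
              (norm_nonneg _) hC0.le
        _ = C₀ ^ (A :: L).length := by rw [List.length_cons, pow_succ, mul_comm]

lemma sum_fin_map (l : List ℕ) (f : ℕ → ℝ) :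
    ∑ k : Fin l.length, f (l.get k) = (l.map f).sum := by
  induction l with
  | nil => simp
  | cons a l ih => rw [List.map_cons, List.sum_cons, ← ih]; simp [Fin.sum_univ_succ]

/-- Suppose `h_t` depends on `h_{t-1}` only through the leaves of a full
binary tree with `N ≥ 1` internal nodes (so a subset `S` of the `N+1` leaves equals
`h_{t-1}`), and along the root-to-leaf path to leaf `k` each parent-to-child Jacobian
(modeled as the operators in the list `mats k`, of length the depth `l_k`) has norm
at most `C₀` with `0 < C₀ < 1/2`.  The total Jacobian is
`J = ∑_{k ∈ S} (product of Jacobians along path k)`, and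
`‖J‖ ≤ ∑_{k=1}^{N+1} C₀^{l_k} ≤ 1/2 + C₀ < 1`. -/
theorem stmt_13 (p : ℕ) (T : FBT) (hN1 : 1 ≤ T.internals)
    (C₀ : ℝ) (hC0 : 0 < C₀) (hC : C₀ < 1 / 2)
    (mats : Fin T.depths.length →
      List (EuclideanSpace ℝ (Fin p) →L[ℝ] EuclideanSpace ℝ (Fin p)))
    (hlen : ∀ k, (mats k).length = T.depths.get k)
    (hnorm : ∀ k, ∀ A ∈ mats k, ‖A‖ ≤ C₀)
    (S : Finset (Fin T.depths.length))
    (J : EuclideanSpace ℝ (Fin p) →L[ℝ] EuclideanSpace ℝ (Fin p))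
    (hJ : J = ∑ k ∈ S, (mats k).prod) :
    ‖J‖ ≤ (∑ k : Fin T.depths.length, C₀ ^ T.depths.get k) ∧
      (∑ k : Fin T.depths.length, C₀ ^ T.depths.get k) ≤ 1 / 2 + C₀ ∧
      (1 / 2 + C₀ : ℝ) < 1 := by
  obtain ⟨a, b, rfl⟩ : ∃ a b, T = FBT.node a b := by
    cases T with
    | leaf => simp [FBT.internals] at hN1
    | node a b => exact ⟨a, b, rfl⟩
  have hdep1 : ∀ l ∈ (FBT.node a b).depths, 1 ≤ l := by
    intro l hl
    simp only [FBT.depths, List.mem_append, List.mem_map] at hl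
    rcases hl with ⟨x, _, rfl⟩ | ⟨x, _, rfl⟩ <;> omega
  have hsum : ∑ k : Fin (FBT.node a b).depths.length, C₀ ^ (FBT.node a b).depths.get k
      = (((FBT.node a b).depths).map (fun l => C₀ ^ l)).sum := sum_fin_map _ _
  refine ⟨?_, ?_, by linarith⟩
  · rw [hJ]
    calc ‖∑ k ∈ S, (mats k).prod‖ ≤ ∑ k ∈ S, ‖(mats k).prod‖ := norm_sum_le _ _
      _ ≤ ∑ k ∈ S, C₀ ^ (FBT.node a b).depths.get k := by
          apply Finset.sum_le_sum
          intro k _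
          have hne : mats k ≠ [] := by
            have hd : 1 ≤ (a.node b).depths.get k := hdep1 _ (List.get_mem (l := _) k)
            intro h
            have h2 := hlen k
            rw [h] at h2
            simp only [List.length_nil] at h2
            omega
          rw [← hlen k]
          exact prod_norm_le p C₀ hC0 (mats k) hne (hnorm k)
      _ ≤ ∑ k : Fin (FBT.node a b).depths.length, C₀ ^ (FBT.node a b).depths.get k :=
          Finset.sum_le_sum_of_subset_of_nonneg (Finset.subset_univ S)
            (fun k _ _ => by positivity)
  · rw [hsum]
    simp only [FBT.depths, List.map_append, List.map_map, List.sum_append,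
      Function.comp_def, pow_succ]
    rw [List.sum_map_mul_right, List.sum_map_mul_right]
    have := fbt_sum_le_one C₀ hC0 hC a
    have := fbt_sum_le_one C₀ hC0 hC b
    nlinarith
end
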